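/- The number of unordered pairs {m, n} of distinct vectors in N with B(m, n) = 0 is exactly 432; that is, after removing the 24 walls of C from the right-angled 120-cell, the remaining 96 walls meet each other in exactly 432 right-angled faces. -/

import Mathlib

set_option maxRecDepth 100000
set_option maxHeartbeats 1000000

noncomputable section

/-- The Minkowski bilinear form of signature (1,4) on ℝ⁵. -/
def Bform (x y : Fin 5 → ℝ) : ℝ :=
  -(x 0 * y 0) + x 1 * y 1 + x 2 * y 2 + x 3 * y 3 + x 4 * y 4

/-- The golden ratio τ = (1+√5)/2. -/
def gold : ℝ := (1 + Real.sqrt 5) / 2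

/-- Item (1): the 8 vectors obtained by permuting the last 4 coordinates of
(√(2τ), ±2, 0, 0, 0). -/
def item1 : Set (Fin 5 → ℝ) :=
  {v | ∃ (j : Fin 4) (s : ℝ), (s = 1 ∨ s = -1) ∧
    v = Fin.cons (Real.sqrt (2 * gold)) (fun i => if i = j then s * 2 else 0)}

/-- Item (2): the 16 vectors (√(2τ), ±1, ±1, ±1, ±1). -/
def item2 : Set (Fin 5 → ℝ) :=
  {v | ∃ ε : Fin 4 → ℝ, (∀ i, ε i = 1 ∨ ε i = -1) ∧
    v = Fin.cons (Real.sqrt (2 * gold)) ε}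

/-- Item (3): the 96 vectors obtained by applying even permutations of the last 4
coordinates to (√(2τ), ±τ, ±1, ±τ⁻¹, 0), with all 8 sign choices. -/
def item3 : Set (Fin 5 → ℝ) :=
  {v | ∃ σ : Equiv.Perm (Fin 4), Equiv.Perm.sign σ = 1 ∧
    ∃ ε : Fin 3 → ℝ, (∀ i, ε i = 1 ∨ ε i = -1) ∧
      v = Fin.cons (Real.sqrt (2 * gold))
            (fun i => ![ε 0 * gold, ε 1, ε 2 * gold⁻¹, 0] (σ i))}

/-- The 24 normal vectors of items (1) and (2). -/
def Cset : Set (Fin 5 → ℝ) := item1 ∪ item2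

/-- The 120 normal vectors of the right-angled hyperbolic 120-cell. -/
def Vset : Set (Fin 5 → ℝ) := Cset ∪ item3


/-! ### Auxiliary machinery for the count -/

/-- sign as an integer -/
def sg (b : Bool) : ℤ := if b then 1 else -1

/-- parameter space: even permutations with three signs -/
abbrev AA := {σ : Equiv.Perm (Fin 4) // Equiv.Perm.sign σ = 1} × (Fin 3 → Bool)

/-- the last four coordinates of a vector of item (3), as coefficients over `ℤ[τ]`:
`(a, b)` represents `a + b·τ`. -/
def qA (a : AA) (i : Fin 4) : ℤ × ℤ :=
  ![((0 : ℤ), sg (a.2 0)), (sg (a.2 1), 0), (-(sg (a.2 2)), sg (a.2 2)), ((0 : ℤ), (0 : ℤ))]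
    (a.1.1 i)

def tbl : Fin 96 → Fin 4 → ℤ × ℤ :=
  ![ ![ ((0 : ℤ), (1 : ℤ)), ((1 : ℤ), (0 : ℤ)), ((-1 : ℤ), (1 : ℤ)), ((0 : ℤ), (0 : ℤ)) ],
     ![ ((0 : ℤ), (1 : ℤ)), ((1 : ℤ), (0 : ℤ)), ((1 : ℤ), (-1 : ℤ)), ((0 : ℤ), (0 : ℤ)) ],
     ![ ((0 : ℤ), (1 : ℤ)), ((-1 : ℤ), (0 : ℤ)), ((-1 : ℤ), (1 : ℤ)), ((0 : ℤ), (0 : ℤ)) ],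
     ![ ((0 : ℤ), (1 : ℤ)), ((-1 : ℤ), (0 : ℤ)), ((1 : ℤ), (-1 : ℤ)), ((0 : ℤ), (0 : ℤ)) ],
     ![ ((0 : ℤ), (-1 : ℤ)), ((1 : ℤ), (0 : ℤ)), ((-1 : ℤ), (1 : ℤ)), ((0 : ℤ), (0 : ℤ)) ],
     ![ ((0 : ℤ), (-1 : ℤ)), ((1 : ℤ), (0 : ℤ)), ((1 : ℤ), (-1 : ℤ)), ((0 : ℤ), (0 : ℤ)) ],
     ![ ((0 : ℤ), (-1 : ℤ)), ((-1 : ℤ), (0 : ℤ)), ((-1 : ℤ), (1 : ℤ)), ((0 : ℤ), (0 : ℤ)) ],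
     ![ ((0 : ℤ), (-1 : ℤ)), ((-1 : ℤ), (0 : ℤ)), ((1 : ℤ), (-1 : ℤ)), ((0 : ℤ), (0 : ℤ)) ],
     ![ ((0 : ℤ), (1 : ℤ)), ((-1 : ℤ), (1 : ℤ)), ((0 : ℤ), (0 : ℤ)), ((1 : ℤ), (0 : ℤ)) ],
     ![ ((0 : ℤ), (1 : ℤ)), ((1 : ℤ), (-1 : ℤ)), ((0 : ℤ), (0 : ℤ)), ((1 : ℤ), (0 : ℤ)) ],
     ![ ((0 : ℤ), (1 : ℤ)), ((-1 : ℤ), (1 : ℤ)), ((0 : ℤ), (0 : ℤ)), ((-1 : ℤ), (0 : ℤ)) ],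
     ![ ((0 : ℤ), (1 : ℤ)), ((1 : ℤ), (-1 : ℤ)), ((0 : ℤ), (0 : ℤ)), ((-1 : ℤ), (0 : ℤ)) ],
     ![ ((0 : ℤ), (-1 : ℤ)), ((-1 : ℤ), (1 : ℤ)), ((0 : ℤ), (0 : ℤ)), ((1 : ℤ), (0 : ℤ)) ],
     ![ ((0 : ℤ), (-1 : ℤ)), ((1 : ℤ), (-1 : ℤ)), ((0 : ℤ), (0 : ℤ)), ((1 : ℤ), (0 : ℤ)) ],
     ![ ((0 : ℤ), (-1 : ℤ)), ((-1 : ℤ), (1 : ℤ)), ((0 : ℤ), (0 : ℤ)), ((-1 : ℤ), (0 : ℤ)) ],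
     ![ ((0 : ℤ), (-1 : ℤ)), ((1 : ℤ), (-1 : ℤ)), ((0 : ℤ), (0 : ℤ)), ((-1 : ℤ), (0 : ℤ)) ],
     ![ ((0 : ℤ), (1 : ℤ)), ((0 : ℤ), (0 : ℤ)), ((1 : ℤ), (0 : ℤ)), ((-1 : ℤ), (1 : ℤ)) ],
     ![ ((0 : ℤ), (1 : ℤ)), ((0 : ℤ), (0 : ℤ)), ((1 : ℤ), (0 : ℤ)), ((1 : ℤ), (-1 : ℤ)) ],
     ![ ((0 : ℤ), (1 : ℤ)), ((0 : ℤ), (0 : ℤ)), ((-1 : ℤ), (0 : ℤ)), ((-1 : ℤ), (1 : ℤ)) ],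
     ![ ((0 : ℤ), (1 : ℤ)), ((0 : ℤ), (0 : ℤ)), ((-1 : ℤ), (0 : ℤ)), ((1 : ℤ), (-1 : ℤ)) ],
     ![ ((0 : ℤ), (-1 : ℤ)), ((0 : ℤ), (0 : ℤ)), ((1 : ℤ), (0 : ℤ)), ((-1 : ℤ), (1 : ℤ)) ],
     ![ ((0 : ℤ), (-1 : ℤ)), ((0 : ℤ), (0 : ℤ)), ((1 : ℤ), (0 : ℤ)), ((1 : ℤ), (-1 : ℤ)) ],
     ![ ((0 : ℤ), (-1 : ℤ)), ((0 : ℤ), (0 : ℤ)), ((-1 : ℤ), (0 : ℤ)), ((-1 : ℤ), (1 : ℤ)) ],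
     ![ ((0 : ℤ), (-1 : ℤ)), ((0 : ℤ), (0 : ℤ)), ((-1 : ℤ), (0 : ℤ)), ((1 : ℤ), (-1 : ℤ)) ],
     ![ ((1 : ℤ), (0 : ℤ)), ((0 : ℤ), (1 : ℤ)), ((0 : ℤ), (0 : ℤ)), ((-1 : ℤ), (1 : ℤ)) ],
     ![ ((1 : ℤ), (0 : ℤ)), ((0 : ℤ), (1 : ℤ)), ((0 : ℤ), (0 : ℤ)), ((1 : ℤ), (-1 : ℤ)) ],
     ![ ((-1 : ℤ), (0 : ℤ)), ((0 : ℤ), (1 : ℤ)), ((0 : ℤ), (0 : ℤ)), ((-1 : ℤ), (1 : ℤ)) ],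
     ![ ((-1 : ℤ), (0 : ℤ)), ((0 : ℤ), (1 : ℤ)), ((0 : ℤ), (0 : ℤ)), ((1 : ℤ), (-1 : ℤ)) ],
     ![ ((1 : ℤ), (0 : ℤ)), ((0 : ℤ), (-1 : ℤ)), ((0 : ℤ), (0 : ℤ)), ((-1 : ℤ), (1 : ℤ)) ],
     ![ ((1 : ℤ), (0 : ℤ)), ((0 : ℤ), (-1 : ℤ)), ((0 : ℤ), (0 : ℤ)), ((1 : ℤ), (-1 : ℤ)) ],
     ![ ((-1 : ℤ), (0 : ℤ)), ((0 : ℤ), (-1 : ℤ)), ((0 : ℤ), (0 : ℤ)), ((-1 : ℤ), (1 : ℤ)) ],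
     ![ ((-1 : ℤ), (0 : ℤ)), ((0 : ℤ), (-1 : ℤ)), ((0 : ℤ), (0 : ℤ)), ((1 : ℤ), (-1 : ℤ)) ],
     ![ ((1 : ℤ), (0 : ℤ)), ((-1 : ℤ), (1 : ℤ)), ((0 : ℤ), (1 : ℤ)), ((0 : ℤ), (0 : ℤ)) ],
     ![ ((1 : ℤ), (0 : ℤ)), ((1 : ℤ), (-1 : ℤ)), ((0 : ℤ), (1 : ℤ)), ((0 : ℤ), (0 : ℤ)) ],
     ![ ((-1 : ℤ), (0 : ℤ)), ((-1 : ℤ), (1 : ℤ)), ((0 : ℤ), (1 : ℤ)), ((0 : ℤ), (0 : ℤ)) ],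
     ![ ((-1 : ℤ), (0 : ℤ)), ((1 : ℤ), (-1 : ℤ)), ((0 : ℤ), (1 : ℤ)), ((0 : ℤ), (0 : ℤ)) ],
     ![ ((1 : ℤ), (0 : ℤ)), ((-1 : ℤ), (1 : ℤ)), ((0 : ℤ), (-1 : ℤ)), ((0 : ℤ), (0 : ℤ)) ],
     ![ ((1 : ℤ), (0 : ℤ)), ((1 : ℤ), (-1 : ℤ)), ((0 : ℤ), (-1 : ℤ)), ((0 : ℤ), (0 : ℤ)) ],
     ![ ((-1 : ℤ), (0 : ℤ)), ((-1 : ℤ), (1 : ℤ)), ((0 : ℤ), (-1 : ℤ)), ((0 : ℤ), (0 : ℤ)) ],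
     ![ ((-1 : ℤ), (0 : ℤ)), ((1 : ℤ), (-1 : ℤ)), ((0 : ℤ), (-1 : ℤ)), ((0 : ℤ), (0 : ℤ)) ],
     ![ ((1 : ℤ), (0 : ℤ)), ((0 : ℤ), (0 : ℤ)), ((-1 : ℤ), (1 : ℤ)), ((0 : ℤ), (1 : ℤ)) ],
     ![ ((1 : ℤ), (0 : ℤ)), ((0 : ℤ), (0 : ℤ)), ((1 : ℤ), (-1 : ℤ)), ((0 : ℤ), (1 : ℤ)) ],
     ![ ((-1 : ℤ), (0 : ℤ)), ((0 : ℤ), (0 : ℤ)), ((-1 : ℤ), (1 : ℤ)), ((0 : ℤ), (1 : ℤ)) ],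
     ![ ((-1 : ℤ), (0 : ℤ)), ((0 : ℤ), (0 : ℤ)), ((1 : ℤ), (-1 : ℤ)), ((0 : ℤ), (1 : ℤ)) ],
     ![ ((1 : ℤ), (0 : ℤ)), ((0 : ℤ), (0 : ℤ)), ((-1 : ℤ), (1 : ℤ)), ((0 : ℤ), (-1 : ℤ)) ],
     ![ ((1 : ℤ), (0 : ℤ)), ((0 : ℤ), (0 : ℤ)), ((1 : ℤ), (-1 : ℤ)), ((0 : ℤ), (-1 : ℤ)) ],
     ![ ((-1 : ℤ), (0 : ℤ)), ((0 : ℤ), (0 : ℤ)), ((-1 : ℤ), (1 : ℤ)), ((0 : ℤ), (-1 : ℤ)) ],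
     ![ ((-1 : ℤ), (0 : ℤ)), ((0 : ℤ), (0 : ℤ)), ((1 : ℤ), (-1 : ℤ)), ((0 : ℤ), (-1 : ℤ)) ],
     ![ ((-1 : ℤ), (1 : ℤ)), ((0 : ℤ), (1 : ℤ)), ((1 : ℤ), (0 : ℤ)), ((0 : ℤ), (0 : ℤ)) ],
     ![ ((1 : ℤ), (-1 : ℤ)), ((0 : ℤ), (1 : ℤ)), ((1 : ℤ), (0 : ℤ)), ((0 : ℤ), (0 : ℤ)) ],
     ![ ((-1 : ℤ), (1 : ℤ)), ((0 : ℤ), (1 : ℤ)), ((-1 : ℤ), (0 : ℤ)), ((0 : ℤ), (0 : ℤ)) ],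
     ![ ((1 : ℤ), (-1 : ℤ)), ((0 : ℤ), (1 : ℤ)), ((-1 : ℤ), (0 : ℤ)), ((0 : ℤ), (0 : ℤ)) ],
     ![ ((-1 : ℤ), (1 : ℤ)), ((0 : ℤ), (-1 : ℤ)), ((1 : ℤ), (0 : ℤ)), ((0 : ℤ), (0 : ℤ)) ],
     ![ ((1 : ℤ), (-1 : ℤ)), ((0 : ℤ), (-1 : ℤ)), ((1 : ℤ), (0 : ℤ)), ((0 : ℤ), (0 : ℤ)) ],
     ![ ((-1 : ℤ), (1 : ℤ)), ((0 : ℤ), (-1 : ℤ)), ((-1 : ℤ), (0 : ℤ)), ((0 : ℤ), (0 : ℤ)) ],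
     ![ ((1 : ℤ), (-1 : ℤ)), ((0 : ℤ), (-1 : ℤ)), ((-1 : ℤ), (0 : ℤ)), ((0 : ℤ), (0 : ℤ)) ],
     ![ ((-1 : ℤ), (1 : ℤ)), ((1 : ℤ), (0 : ℤ)), ((0 : ℤ), (0 : ℤ)), ((0 : ℤ), (1 : ℤ)) ],
     ![ ((1 : ℤ), (-1 : ℤ)), ((1 : ℤ), (0 : ℤ)), ((0 : ℤ), (0 : ℤ)), ((0 : ℤ), (1 : ℤ)) ],
     ![ ((-1 : ℤ), (1 : ℤ)), ((-1 : ℤ), (0 : ℤ)), ((0 : ℤ), (0 : ℤ)), ((0 : ℤ), (1 : ℤ)) ],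
     ![ ((1 : ℤ), (-1 : ℤ)), ((-1 : ℤ), (0 : ℤ)), ((0 : ℤ), (0 : ℤ)), ((0 : ℤ), (1 : ℤ)) ],
     ![ ((-1 : ℤ), (1 : ℤ)), ((1 : ℤ), (0 : ℤ)), ((0 : ℤ), (0 : ℤ)), ((0 : ℤ), (-1 : ℤ)) ],
     ![ ((1 : ℤ), (-1 : ℤ)), ((1 : ℤ), (0 : ℤ)), ((0 : ℤ), (0 : ℤ)), ((0 : ℤ), (-1 : ℤ)) ],
     ![ ((-1 : ℤ), (1 : ℤ)), ((-1 : ℤ), (0 : ℤ)), ((0 : ℤ), (0 : ℤ)), ((0 : ℤ), (-1 : ℤ)) ],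
     ![ ((1 : ℤ), (-1 : ℤ)), ((-1 : ℤ), (0 : ℤ)), ((0 : ℤ), (0 : ℤ)), ((0 : ℤ), (-1 : ℤ)) ],
     ![ ((-1 : ℤ), (1 : ℤ)), ((0 : ℤ), (0 : ℤ)), ((0 : ℤ), (1 : ℤ)), ((1 : ℤ), (0 : ℤ)) ],
     ![ ((1 : ℤ), (-1 : ℤ)), ((0 : ℤ), (0 : ℤ)), ((0 : ℤ), (1 : ℤ)), ((1 : ℤ), (0 : ℤ)) ],
     ![ ((-1 : ℤ), (1 : ℤ)), ((0 : ℤ), (0 : ℤ)), ((0 : ℤ), (1 : ℤ)), ((-1 : ℤ), (0 : ℤ)) ],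
     ![ ((1 : ℤ), (-1 : ℤ)), ((0 : ℤ), (0 : ℤ)), ((0 : ℤ), (1 : ℤ)), ((-1 : ℤ), (0 : ℤ)) ],
     ![ ((-1 : ℤ), (1 : ℤ)), ((0 : ℤ), (0 : ℤ)), ((0 : ℤ), (-1 : ℤ)), ((1 : ℤ), (0 : ℤ)) ],
     ![ ((1 : ℤ), (-1 : ℤ)), ((0 : ℤ), (0 : ℤ)), ((0 : ℤ), (-1 : ℤ)), ((1 : ℤ), (0 : ℤ)) ],
     ![ ((-1 : ℤ), (1 : ℤ)), ((0 : ℤ), (0 : ℤ)), ((0 : ℤ), (-1 : ℤ)), ((-1 : ℤ), (0 : ℤ)) ],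
     ![ ((1 : ℤ), (-1 : ℤ)), ((0 : ℤ), (0 : ℤ)), ((0 : ℤ), (-1 : ℤ)), ((-1 : ℤ), (0 : ℤ)) ],
     ![ ((0 : ℤ), (0 : ℤ)), ((0 : ℤ), (1 : ℤ)), ((-1 : ℤ), (1 : ℤ)), ((1 : ℤ), (0 : ℤ)) ],
     ![ ((0 : ℤ), (0 : ℤ)), ((0 : ℤ), (1 : ℤ)), ((1 : ℤ), (-1 : ℤ)), ((1 : ℤ), (0 : ℤ)) ],
     ![ ((0 : ℤ), (0 : ℤ)), ((0 : ℤ), (1 : ℤ)), ((-1 : ℤ), (1 : ℤ)), ((-1 : ℤ), (0 : ℤ)) ],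
     ![ ((0 : ℤ), (0 : ℤ)), ((0 : ℤ), (1 : ℤ)), ((1 : ℤ), (-1 : ℤ)), ((-1 : ℤ), (0 : ℤ)) ],
     ![ ((0 : ℤ), (0 : ℤ)), ((0 : ℤ), (-1 : ℤ)), ((-1 : ℤ), (1 : ℤ)), ((1 : ℤ), (0 : ℤ)) ],
     ![ ((0 : ℤ), (0 : ℤ)), ((0 : ℤ), (-1 : ℤ)), ((1 : ℤ), (-1 : ℤ)), ((1 : ℤ), (0 : ℤ)) ],
     ![ ((0 : ℤ), (0 : ℤ)), ((0 : ℤ), (-1 : ℤ)), ((-1 : ℤ), (1 : ℤ)), ((-1 : ℤ), (0 : ℤ)) ],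
     ![ ((0 : ℤ), (0 : ℤ)), ((0 : ℤ), (-1 : ℤ)), ((1 : ℤ), (-1 : ℤ)), ((-1 : ℤ), (0 : ℤ)) ],
     ![ ((0 : ℤ), (0 : ℤ)), ((1 : ℤ), (0 : ℤ)), ((0 : ℤ), (1 : ℤ)), ((-1 : ℤ), (1 : ℤ)) ],
     ![ ((0 : ℤ), (0 : ℤ)), ((1 : ℤ), (0 : ℤ)), ((0 : ℤ), (1 : ℤ)), ((1 : ℤ), (-1 : ℤ)) ],
     ![ ((0 : ℤ), (0 : ℤ)), ((-1 : ℤ), (0 : ℤ)), ((0 : ℤ), (1 : ℤ)), ((-1 : ℤ), (1 : ℤ)) ],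
     ![ ((0 : ℤ), (0 : ℤ)), ((-1 : ℤ), (0 : ℤ)), ((0 : ℤ), (1 : ℤ)), ((1 : ℤ), (-1 : ℤ)) ],
     ![ ((0 : ℤ), (0 : ℤ)), ((1 : ℤ), (0 : ℤ)), ((0 : ℤ), (-1 : ℤ)), ((-1 : ℤ), (1 : ℤ)) ],
     ![ ((0 : ℤ), (0 : ℤ)), ((1 : ℤ), (0 : ℤ)), ((0 : ℤ), (-1 : ℤ)), ((1 : ℤ), (-1 : ℤ)) ],
     ![ ((0 : ℤ), (0 : ℤ)), ((-1 : ℤ), (0 : ℤ)), ((0 : ℤ), (-1 : ℤ)), ((-1 : ℤ), (1 : ℤ)) ],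
     ![ ((0 : ℤ), (0 : ℤ)), ((-1 : ℤ), (0 : ℤ)), ((0 : ℤ), (-1 : ℤ)), ((1 : ℤ), (-1 : ℤ)) ],
     ![ ((0 : ℤ), (0 : ℤ)), ((-1 : ℤ), (1 : ℤ)), ((1 : ℤ), (0 : ℤ)), ((0 : ℤ), (1 : ℤ)) ],
     ![ ((0 : ℤ), (0 : ℤ)), ((1 : ℤ), (-1 : ℤ)), ((1 : ℤ), (0 : ℤ)), ((0 : ℤ), (1 : ℤ)) ],
     ![ ((0 : ℤ), (0 : ℤ)), ((-1 : ℤ), (1 : ℤ)), ((-1 : ℤ), (0 : ℤ)), ((0 : ℤ), (1 : ℤ)) ],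
     ![ ((0 : ℤ), (0 : ℤ)), ((1 : ℤ), (-1 : ℤ)), ((-1 : ℤ), (0 : ℤ)), ((0 : ℤ), (1 : ℤ)) ],
     ![ ((0 : ℤ), (0 : ℤ)), ((-1 : ℤ), (1 : ℤ)), ((1 : ℤ), (0 : ℤ)), ((0 : ℤ), (-1 : ℤ)) ],
     ![ ((0 : ℤ), (0 : ℤ)), ((1 : ℤ), (-1 : ℤ)), ((1 : ℤ), (0 : ℤ)), ((0 : ℤ), (-1 : ℤ)) ],
     ![ ((0 : ℤ), (0 : ℤ)), ((-1 : ℤ), (1 : ℤ)), ((-1 : ℤ), (0 : ℤ)), ((0 : ℤ), (-1 : ℤ)) ],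
     ![ ((0 : ℤ), (0 : ℤ)), ((1 : ℤ), (-1 : ℤ)), ((-1 : ℤ), (0 : ℤ)), ((0 : ℤ), (-1 : ℤ)) ] ]

/-- interpretation of a coefficient pair as a real number -/
def rr (p : ℤ × ℤ) : ℝ := p.1 + p.2 * gold

/-- multiplication in `ℤ[τ]` using `τ² = τ + 1` -/
def mulq (p q : ℤ × ℤ) : ℤ × ℤ := (p.1*q.1 + p.2*q.2, p.1*q.2 + p.2*q.1 + p.2*q.2)

/-- the bilinear form, computed over `ℤ[τ]` on table entries -/
def BQT (k l : Fin 96) : ℤ × ℤ :=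
  (0, -2) + mulq (tbl k 0) (tbl l 0) + mulq (tbl k 1) (tbl l 1) + mulq (tbl k 2) (tbl l 2)
    + mulq (tbl k 3) (tbl l 3)

/-- the 96 vectors, indexed by the table -/
def vecT (k : Fin 96) : Fin 5 → ℝ := Fin.cons (Real.sqrt (2 * gold)) (fun i => rr (tbl k i))

lemma mgold_pos : 0 < gold := by
  have := Real.sqrt_nonneg 5
  unfold gold; linarith

lemma mgold_sq : gold * gold = gold + 1 := by
  have h : Real.sqrt 5 * Real.sqrt 5 = 5 := Real.mul_self_sqrt (by norm_num)
  unfold gold; nlinarith [h]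

lemma mgold_inv : gold⁻¹ = gold - 1 :=
  inv_eq_of_mul_eq_one_right (by linear_combination mgold_sq)

lemma mgold_irr : Irrational gold := by
  have h5 : Irrational (Real.sqrt 5) := by
    have := (by norm_num : Nat.Prime 5).irrational_sqrt
    exact_mod_cast this
  rintro ⟨x, hx⟩
  exact h5 ⟨2*x - 1, by push_cast; rw [hx]; unfold gold; ring⟩

lemma rr_zero {p : ℤ × ℤ} (h : rr p = 0) : p = 0 := by
  obtain ⟨p1, p2⟩ := p
  simp only [rr] at h
  by_cases h2 : p2 = 0
  · subst h2
    norm_num at h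
    simp [h]
  · exfalso
    have hp2 : (p2 : ℝ) ≠ 0 := Int.cast_ne_zero.mpr h2
    refine mgold_irr ⟨(-p1)/p2, ?_⟩
    push_cast
    rw [div_eq_iff hp2]
    linear_combination -h

lemma rr_inj {p p' : ℤ × ℤ} (h : rr p = rr p') : p = p' := by
  have hs : rr (p - p') = 0 := by
    have : rr (p - p') = rr p - rr p' := by
      simp only [rr, Prod.fst_sub, Prod.snd_sub]
      push_cast; ring
    rw [this, h, sub_self]
  exact sub_eq_zero.mp (rr_zero hs)

lemma rr_add (p q : ℤ × ℤ) : rr (p + q) = rr p + rr q := by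
  simp only [rr, Prod.fst_add, Prod.snd_add]
  push_cast; ring

lemma rr_mul (p q : ℤ × ℤ) : rr (mulq p q) = rr p * rr q := by
  simp only [rr, mulq]
  push_cast
  linear_combination (-(p.2 : ℝ) * (q.2 : ℝ)) * mgold_sq

lemma mulq_comm (p q : ℤ × ℤ) : mulq p q = mulq q p := by
  unfold mulq; exact Prod.ext (by ring) (by ring)

lemma BQT_comm (k l : Fin 96) : BQT k l = BQT l k := by
  unfold BQT
  rw [mulq_comm (tbl k 0), mulq_comm (tbl k 1), mulq_comm (tbl k 2), mulq_comm (tbl k 3)]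

set_option maxRecDepth 100000 in
lemma tbl_inj : Function.Injective tbl := by decide

lemma vecT_inj : Function.Injective vecT := by
  intro k l h
  apply tbl_inj; funext i
  have := congrFun h i.succ
  simp only [vecT, Fin.cons_succ] at this
  exact rr_inj this

lemma Bform_vecT (k l : Fin 96) : Bform (vecT k) (vecT l) = rr (BQT k l) := by
  have hB : Bform (vecT k) (vecT l)
      = -(Real.sqrt (2*gold) * Real.sqrt (2*gold))
        + rr (tbl k 0) * rr (tbl l 0) + rr (tbl k 1) * rr (tbl l 1)
        + rr (tbl k 2) * rr (tbl l 2) + rr (tbl k 3) * rr (tbl l 3) := rfl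
  rw [hB, Real.mul_self_sqrt (by linarith [mgold_pos])]
  show _ = rr ((0, -2) + mulq (tbl k 0) (tbl l 0) + mulq (tbl k 1) (tbl l 1)
      + mulq (tbl k 2) (tbl l 2) + mulq (tbl k 3) (tbl l 3))
  rw [rr_add, rr_add, rr_add, rr_add, rr_mul, rr_mul, rr_mul, rr_mul]
  have h2 : rr (0, -2) = -(2*gold) := by unfold rr; push_cast; ring
  rw [h2]; try ring

lemma rr_entry (b : Fin 3 → Bool) (x : Fin 4) :
    rr (![((0 : ℤ), sg (b 0)), (sg (b 1), 0), (-(sg (b 2)), sg (b 2)), ((0 : ℤ), (0 : ℤ))] x)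
      = ![((sg (b 0) : ℤ) : ℝ) * gold, ((sg (b 1) : ℤ) : ℝ),
          ((sg (b 2) : ℤ) : ℝ) * gold⁻¹, (0 : ℝ)] x := by
  fin_cases x <;> cases hb0 : b 0 <;> cases hb1 : b 1 <;> cases hb2 : b 2 <;>
    norm_num [sg, rr, mgold_inv] <;> ring

set_option maxRecDepth 100000 in
lemma hAT : ∀ a : AA, ∃ k : Fin 96, ∀ i, qA a i = tbl k i := by decide

set_option maxRecDepth 100000 in
lemma hTA : ∀ k : Fin 96, ∃ a : AA, ∀ i, qA a i = tbl k i := by decide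

lemma item3_eq : item3 = Set.range vecT := by
  classical
  ext v
  simp only [item3, Set.mem_setOf_eq, Set.mem_range]
  constructor
  · rintro ⟨σ, hσ, ε, hε, rfl⟩
    set b : Fin 3 → Bool := fun j => if ε j = 1 then true else false with hbdef
    have hbe : ∀ j : Fin 3, ((sg (b j) : ℤ) : ℝ) = ε j := by
      intro j
      rcases hε j with h | h
      · have hb : b j = true := by rw [hbdef]; simp [h]
        rw [hb]; norm_num [sg, h]
      · have hb : b j = false := by rw [hbdef]; norm_num [h]
        rw [hb]; norm_num [sg, h]
    obtain ⟨k, hk⟩ := hAT (⟨σ, hσ⟩, b)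
    refine ⟨k, ?_⟩
    funext i
    refine Fin.cases rfl (fun j => ?_) i
    simp only [vecT, Fin.cons_succ]
    rw [← hk j]
    have hq : qA (⟨σ, hσ⟩, b) j
        = ![((0 : ℤ), sg (b 0)), (sg (b 1), 0), (-(sg (b 2)), sg (b 2)), ((0 : ℤ), (0 : ℤ))]
            (σ j) := rfl
    rw [hq, rr_entry b (σ j), ← hbe 0, ← hbe 1, ← hbe 2]
  · rintro ⟨k, rfl⟩
    obtain ⟨⟨⟨σ, hσ⟩, b⟩, hk⟩ := hTA k
    refine ⟨σ, hσ, fun j => ((sg (b j) : ℤ) : ℝ), fun j => ?_, ?_⟩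
    · cases hb : b j <;> simp [sg, hb]
    · funext i
      refine Fin.cases rfl (fun j => ?_) i
      simp only [vecT, Fin.cons_succ]
      rw [← hk j]
      exact rr_entry b (σ j)

set_option maxRecDepth 100000 in
set_option maxHeartbeats 4000000 in
lemma count432 : (Finset.univ.sum (fun k : Fin 96 =>
    (Finset.univ.filter (fun l : Fin 96 => k < l ∧ BQT k l = 0)).card)) = 432 := by decide

/-- The number of unordered pairs {m, n} of distinct B-orthogonal vectors in the
96-element set N (= item (3)) is exactly 432: the 96 remaining walls of the 120-cell meet
in exactly 432 right-angled faces. -/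
theorem stmt10 :
    {s : Set (Fin 5 → ℝ) | ∃ m ∈ item3, ∃ n ∈ item3,
      m ≠ n ∧ Bform m n = 0 ∧ s = {m, n}}.ncard = 432 := by
  classical
  have h3 : item3 = Set.range vecT := item3_eq
  set F : Finset (Fin 96 × Fin 96) :=
    Finset.univ.filter (fun p => p.1 < p.2 ∧ BQT p.1 p.2 = 0) with hFdef
  have hmemF : ∀ p : Fin 96 × Fin 96, p ∈ F ↔ p.1 < p.2 ∧ BQT p.1 p.2 = 0 := by
    intro p; simp [hFdef]
  have hcard : F.card = 432 := by
    rw [← count432]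
    rw [Finset.card_eq_sum_card_fiberwise
      (f := Prod.fst) (t := Finset.univ) (fun p _ => Finset.mem_univ _)]
    refine Finset.sum_congr rfl (fun k _ => ?_)
    refine Finset.card_nbij' (fun p => p.2) (fun l => (k, l)) ?_ ?_ ?_ ?_
    · intro p hp
      simp only [Finset.mem_coe, Finset.mem_filter, hFdef, Finset.mem_univ, true_and] at hp ⊢
      obtain ⟨⟨h1, h2⟩, h3⟩ := hp
      subst h3
      exact ⟨h1, h2⟩
    · intro l hl
      simp only [Finset.mem_coe, Finset.mem_filter, hFdef, Finset.mem_univ, true_and] at hl ⊢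
      exact ⟨hl, trivial⟩
    · intro p hp
      simp only [Finset.mem_coe, Finset.mem_filter, hFdef, Finset.mem_univ, true_and] at hp
      obtain ⟨-, h3⟩ := hp
      exact Prod.ext h3.symm rfl
    · intro l _
      rfl
  have hgoal : {s : Set (Fin 5 → ℝ) | ∃ m ∈ item3, ∃ n ∈ item3,
      m ≠ n ∧ Bform m n = 0 ∧ s = {m, n}}
      = (fun p : Fin 96 × Fin 96 => ({vecT p.1, vecT p.2} : Set (Fin 5 → ℝ))) '' ↑F := by
    ext s
    simp only [Set.mem_setOf_eq, Set.mem_image, Finset.mem_coe]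
    constructor
    · rintro ⟨m, hm, n, hn, hmn, hB, rfl⟩
      rw [h3] at hm hn
      obtain ⟨k, rfl⟩ := hm
      obtain ⟨l, rfl⟩ := hn
      have hkl : k ≠ l := fun h => hmn (by rw [h])
      have hBQ : BQT k l = 0 := rr_zero (by rw [← Bform_vecT]; exact hB)
      rcases hkl.lt_or_gt with h | h
      · exact ⟨(k, l), (hmemF _).2 ⟨h, hBQ⟩, rfl⟩
      · exact ⟨(l, k), (hmemF _).2 ⟨h, by rw [← BQT_comm]; exact hBQ⟩,
          (Set.pair_comm (vecT l) (vecT k))⟩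
    · rintro ⟨⟨k, l⟩, hp, rfl⟩
      obtain ⟨hlt, hBQ⟩ := (hmemF _).1 hp
      refine ⟨vecT k, h3 ▸ Set.mem_range_self k, vecT l, h3 ▸ Set.mem_range_self l, ?_, ?_, rfl⟩
      · exact fun h => (ne_of_lt hlt) (vecT_inj h)
      · rw [Bform_vecT, hBQ]
        simp [rr]
  rw [hgoal, Set.ncard_image_of_injOn, Set.ncard_coe_finset, hcard]
  intro p hp q hq h
  simp only [Finset.mem_coe] at hp hq
  obtain ⟨hp1, -⟩ := (hmemF _).1 hp
  obtain ⟨hq1, -⟩ := (hmemF _).1 hq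
  rcases Set.pair_eq_pair_iff.mp h with ⟨h1, h2⟩ | ⟨h1, h2⟩
  · exact Prod.ext (vecT_inj h1) (vecT_inj h2)
  · exfalso
    have e1 : p.1 = q.2 := vecT_inj h1
    have e2 : p.2 = q.1 := vecT_inj h2
    rw [e2] at hp1
    rw [← e1] at hq1
    exact lt_irrefl _ (hp1.trans hq1)
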